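/- Let R ∈ ℓ¹(ℤ) be symmetric, (b_k) ∈ ℓ¹, and (b_{k,p}) a triangular array with ∑_{k=1}^p |b_{k,p}−b_k| → 0 and limsup_p ∑_{k=1}^p |b_{k,p}| ≤ ∑_k |b_k|. Define R_{k,p} and R̄_{k,p} by the filtered covariance formula C_{k} = ∑_{j=1}^p c_j² R_k + ∑_{t=1}^{p−1} ∑_{j=1}^{p−t} c_j c_{j+t}(R_{k−t}+R_{k+t}) with c = (b_j)_{j≤p} and c = (b_{j,p})_{j≤p} respectively. Then ∑_{k∈ℤ} |R_{k,p} − R̄_{k,p}| ≤ (∑_{i=1}^p |b_i| + ∑_{i=1}^p |b_{i,p}|)(∑_{i=1}^p |b_i − b_{i,p}|) ∑_{k∈ℤ}|R_k|, and hence this quantity tends to 0 as p → ∞. -/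

import Mathlib

open Filter Finset

lemma offdiag_sum (p : ℕ) (f : ℕ × ℕ → ℝ) :
    ∑ t ∈ Icc 1 (p - 1), ∑ j ∈ Icc 1 (p - t), f (j, j + t)
      = ∑ x ∈ ((Icc 1 p) ×ˢ (Icc 1 p)).filter (fun x => x.1 < x.2), f x := by
  rw [Finset.sum_sigma']
  apply Finset.sum_nbij' (i := fun x => (x.2, x.2 + x.1)) (j := fun y => ⟨y.2 - y.1, y.1⟩)
  · rintro ⟨t, j⟩ hx
    simp only [Finset.mem_sigma, mem_Icc] at hx
    simp only [mem_filter, mem_product, mem_Icc]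
    omega
  · rintro ⟨a, b⟩ hy
    simp only [mem_filter, mem_product, mem_Icc] at hy
    simp only [Finset.mem_sigma, mem_Icc]
    omega
  · rintro ⟨t, j⟩ hx; simp
  · rintro ⟨a, b⟩ hy
    simp only [mem_filter, mem_product, mem_Icc] at hy
    dsimp only
    rw [Prod.mk.injEq]
    omega
  · rintro ⟨t, j⟩ hx; rfl

lemma offdiag_sum' (p : ℕ) (f : ℕ × ℕ → ℝ) :
    ∑ t ∈ Icc 1 (p - 1), ∑ j ∈ Icc 1 (p - t), f (j + t, j)
      = ∑ x ∈ ((Icc 1 p) ×ˢ (Icc 1 p)).filter (fun x => x.2 < x.1), f x := by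
  rw [Finset.sum_sigma']
  apply Finset.sum_nbij' (i := fun x => (x.2 + x.1, x.2)) (j := fun y => ⟨y.1 - y.2, y.2⟩)
  · rintro ⟨t, j⟩ hx
    simp only [Finset.mem_sigma, mem_Icc] at hx
    simp only [mem_filter, mem_product, mem_Icc]
    omega
  · rintro ⟨a, b⟩ hy
    simp only [mem_filter, mem_product, mem_Icc] at hy
    simp only [Finset.mem_sigma, mem_Icc]
    omega
  · rintro ⟨t, j⟩ hx; simp
  · rintro ⟨a, b⟩ hy
    simp only [mem_filter, mem_product, mem_Icc] at hy
    dsimp only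
    rw [Prod.mk.injEq]
    omega
  · rintro ⟨t, j⟩ hx; rfl

lemma diag_sum (p : ℕ) (f : ℕ × ℕ → ℝ) :
    ∑ j ∈ Icc 1 p, f (j, j)
      = ∑ x ∈ ((Icc 1 p) ×ˢ (Icc 1 p)).filter (fun x => x.1 = x.2), f x := by
  apply Finset.sum_nbij' (i := fun j => (j, j)) (j := fun y => y.1)
  · intro a ha
    simp only [mem_Icc] at ha
    simp only [mem_filter, mem_product, mem_Icc]
    exact ⟨⟨⟨ha.1, ha.2⟩, ha.1, ha.2⟩, trivial⟩
  · rintro ⟨a, b⟩ hy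
    simp only [mem_filter, mem_product, mem_Icc] at hy
    simp only [mem_Icc]
    omega
  · intro a _; rfl
  · rintro ⟨a, b⟩ hy
    simp only [mem_filter, mem_product, mem_Icc] at hy
    dsimp only
    rw [Prod.mk.injEq]
    omega
  · intro a _; rfl

lemma key_comb (u v : ℕ → ℝ) (hu : ∀ i, 0 ≤ u i) (hv : ∀ i, 0 ≤ v i) (p : ℕ) :
    (∑ j ∈ Icc 1 p, u j * v j)
      + ∑ t ∈ Icc 1 (p - 1), ∑ j ∈ Icc 1 (p - t), (u j * v (j + t) + u (j + t) * v j)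
    ≤ (∑ i ∈ Icc 1 p, u i) * (∑ i ∈ Icc 1 p, v i) := by
  classical
  set sq := (Icc 1 p) ×ˢ (Icc 1 p) with hsq'
  set f : ℕ × ℕ → ℝ := fun x => u x.1 * v x.2 with hf
  have hsq : (∑ i ∈ Icc 1 p, u i) * (∑ i ∈ Icc 1 p, v i) = ∑ x ∈ sq, f x := by
    rw [Finset.sum_mul_sum, hsq', Finset.sum_product]
  have h1 : ∑ j ∈ Icc 1 p, u j * v j = ∑ x ∈ sq.filter (fun x => x.1 = x.2), f x :=
    diag_sum p f
  have h2 : ∑ t ∈ Icc 1 (p - 1), ∑ j ∈ Icc 1 (p - t), (u j * v (j + t) + u (j + t) * v j)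
      = (∑ x ∈ sq.filter (fun x => x.1 < x.2), f x)
        + ∑ x ∈ sq.filter (fun x => x.2 < x.1), f x := by
    rw [← offdiag_sum p f, ← offdiag_sum' p f, ← Finset.sum_add_distrib]
    apply Finset.sum_congr rfl
    intro t _
    rw [← Finset.sum_add_distrib]
  rw [h1, h2, hsq]
  have d1 : Disjoint (sq.filter (fun x => x.1 < x.2)) (sq.filter (fun x => x.2 < x.1)) := by
    rw [Finset.disjoint_left]
    intro x hx hx'
    simp only [mem_filter] at hx hx'
    omega
  have d2 : Disjoint (sq.filter (fun x => x.1 = x.2))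
      ((sq.filter (fun x => x.1 < x.2)) ∪ sq.filter (fun x => x.2 < x.1)) := by
    rw [Finset.disjoint_left]
    intro x hx hx'
    simp only [mem_filter, Finset.mem_union] at hx hx'
    omega
  rw [← Finset.sum_union d1, ← Finset.sum_union d2]
  apply Finset.sum_le_sum_of_subset_of_nonneg
  · intro x hx
    simp only [Finset.mem_union, mem_filter] at hx
    tauto
  · intro x _ _
    exact mul_nonneg (hu _) (hv _)

/-- Covariance of the filtered process `∑_{j=1}^p c_j X_{n-j}`:
`C_k = ∑_{j=1}^p c_j² R_k + ∑_{t=1}^{p-1} ∑_{j=1}^{p-t} c_j c_{j+t} (R_{k-t} + R_{k+t})`. -/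
noncomputable def filtCov (R : ℤ → ℝ) (c : ℕ → ℝ) (p : ℕ) (k : ℤ) : ℝ :=
  (∑ j ∈ Icc 1 p, c j ^ 2) * R k
    + ∑ t ∈ Icc 1 (p - 1), ∑ j ∈ Icc 1 (p - t), c j * c (j + t) * (R (k - t) + R (k + t))

set_option maxHeartbeats 1000000 in
lemma bound_one (R : ℤ → ℝ) (hR : Summable fun k => |R k|) (blim c' : ℕ → ℝ) (p : ℕ) :
    ∑' k : ℤ, |filtCov R blim p k - filtCov R c' p k|
      ≤ (∑ i ∈ Icc 1 p, |blim i| + ∑ i ∈ Icc 1 p, |c' i|)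
          * (∑ i ∈ Icc 1 p, |blim i - c' i|) * ∑' k : ℤ, |R k| := by
  have hRs : Summable R := hR.of_abs
  set S2 : ℝ := ∑ j ∈ Icc 1 p, (blim j ^ 2 - c' j ^ 2) with hS2
  set e : ℕ → ℕ → ℝ := fun t j => blim j * blim (j + t) - c' j * c' (j + t) with he
  have hD : ∀ k : ℤ, filtCov R blim p k - filtCov R c' p k
      = S2 * R k + ∑ t ∈ Icc 1 (p - 1), ∑ j ∈ Icc 1 (p - t),
          e t j * (R (k - t) + R (k + t)) := by
    intro k
    simp only [filtCov, hS2, he]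
    rw [add_sub_add_comm, ← sub_mul, ← Finset.sum_sub_distrib, ← Finset.sum_sub_distrib]
    congr 1
    refine Finset.sum_congr rfl fun t _ => ?_
    rw [← Finset.sum_sub_distrib]
    refine Finset.sum_congr rfl fun j _ => ?_
    ring
  have hsub : ∀ t : ℕ, Summable fun k : ℤ => |R (k - (t : ℤ))| :=
    fun t => (Equiv.subRight (t : ℤ)).summable_iff.mpr hR
  have hadd : ∀ t : ℕ, Summable fun k : ℤ => |R (k + (t : ℤ))| :=
    fun t => (Equiv.addRight (t : ℤ)).summable_iff.mpr hR
  have hsub' : ∀ t : ℕ, Summable fun k : ℤ => R (k - (t : ℤ)) :=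
    fun t => (Equiv.subRight (t : ℤ)).summable_iff.mpr hRs
  have hadd' : ∀ t : ℕ, Summable fun k : ℤ => R (k + (t : ℤ)) :=
    fun t => (Equiv.addRight (t : ℤ)).summable_iff.mpr hRs
  have htsub : ∀ t : ℕ, ∑' k : ℤ, |R (k - (t : ℤ))| = ∑' k : ℤ, |R k| :=
    fun t => (Equiv.subRight (t : ℤ)).tsum_eq (fun k => |R k|)
  have htadd : ∀ t : ℕ, ∑' k : ℤ, |R (k + (t : ℤ))| = ∑' k : ℤ, |R k| :=
    fun t => (Equiv.addRight (t : ℤ)).tsum_eq (fun k => |R k|)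
  have hDsum : Summable fun k => filtCov R blim p k - filtCov R c' p k := by
    rw [funext hD]
    exact (hRs.mul_left _).add (summable_sum fun t _ => summable_sum fun j _ =>
      ((hsub' t).add (hadd' t)).mul_left _)
  set G : ℤ → ℝ := fun k => |S2| * |R k| + ∑ t ∈ Icc 1 (p - 1), ∑ j ∈ Icc 1 (p - t),
      |e t j| * (|R (k - t)| + |R (k + t)|) with hG
  have hGsum : Summable G :=
    (hR.mul_left _).add (summable_sum fun t _ => summable_sum fun j _ =>
      ((hsub t).add (hadd t)).mul_left _)
  have hpt : ∀ k, |filtCov R blim p k - filtCov R c' p k| ≤ G k := by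
    intro k
    rw [hD]
    simp only [hG]
    refine (abs_add_le _ _).trans ?_
    rw [abs_mul]
    gcongr
    refine (Finset.abs_sum_le_sum_abs _ _).trans ?_
    gcongr with t ht
    refine (Finset.abs_sum_le_sum_abs _ _).trans ?_
    gcongr with j hj
    rw [abs_mul]
    gcongr
    exact abs_add_le _ _
  have hGt : ∑' k, G k = |S2| * (∑' k : ℤ, |R k|)
      + ∑ t ∈ Icc 1 (p - 1), ∑ j ∈ Icc 1 (p - t),
          |e t j| * ((∑' k : ℤ, |R k|) + ∑' k : ℤ, |R k|) := by
    simp only [hG]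
    rw [Summable.tsum_add (hR.mul_left _) (summable_sum fun t _ => summable_sum fun j _ =>
      ((hsub t).add (hadd t)).mul_left _), tsum_mul_left]
    congr 1
    rw [Summable.tsum_finsetSum (fun t _ => summable_sum fun j _ => ((hsub t).add (hadd t)).mul_left _)]
    refine Finset.sum_congr rfl fun t _ => ?_
    rw [Summable.tsum_finsetSum (fun j _ => ((hsub t).add (hadd t)).mul_left _)]
    refine Finset.sum_congr rfl fun j _ => ?_
    rw [tsum_mul_left, Summable.tsum_add (hsub t) (hadd t), htsub, htadd]
  have hT0 : 0 ≤ ∑' k : ℤ, |R k| := tsum_nonneg fun k => abs_nonneg _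
  set u : ℕ → ℝ := fun i => |blim i| + |c' i| with hu
  set v : ℕ → ℝ := fun i => |blim i - c' i| with hv
  have hkey : |S2| + 2 * ∑ t ∈ Icc 1 (p - 1), ∑ j ∈ Icc 1 (p - t), |e t j|
      ≤ (∑ i ∈ Icc 1 p, u i) * (∑ i ∈ Icc 1 p, v i) := by
    refine le_trans ?_ (key_comb u v (fun i => add_nonneg (abs_nonneg _) (abs_nonneg _))
      (fun i => abs_nonneg _) p)
    apply add_le_add
    · refine (Finset.abs_sum_le_sum_abs _ _).trans (Finset.sum_le_sum fun j _ => ?_)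
      have hj : blim j ^ 2 - c' j ^ 2 = (blim j + c' j) * (blim j - c' j) := by ring
      rw [hj, abs_mul]
      exact mul_le_mul_of_nonneg_right (abs_add_le _ _) (abs_nonneg _)
    · rw [Finset.mul_sum]
      refine Finset.sum_le_sum fun t _ => ?_
      rw [Finset.mul_sum]
      refine Finset.sum_le_sum fun j _ => ?_
      have h2e : 2 * e t j = (blim j + c' j) * (blim (j + t) - c' (j + t))
          + (blim (j + t) + c' (j + t)) * (blim j - c' j) := by
        simp only [he]; ring
      calc 2 * |e t j| = |2 * e t j| := by
            rw [abs_mul]; norm_num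
        _ = |(blim j + c' j) * (blim (j + t) - c' (j + t))
              + (blim (j + t) + c' (j + t)) * (blim j - c' j)| := by rw [h2e]
        _ ≤ |(blim j + c' j)| * |(blim (j + t) - c' (j + t))|
              + |(blim (j + t) + c' (j + t))| * |(blim j - c' j)| := by
            refine (abs_add_le _ _).trans ?_
            rw [abs_mul, abs_mul]
        _ ≤ u j * v (j + t) + u (j + t) * v j := by
            simp only [hu, hv]
            gcongr
            · exact abs_add_le _ _
            · exact abs_add_le _ _
  calc ∑' k : ℤ, |filtCov R blim p k - filtCov R c' p k|
      ≤ ∑' k, G k := Summable.tsum_le_tsum hpt hDsum.abs hGsum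
    _ = |S2| * (∑' k : ℤ, |R k|)
        + ∑ t ∈ Icc 1 (p - 1), ∑ j ∈ Icc 1 (p - t),
            |e t j| * ((∑' k : ℤ, |R k|) + ∑' k : ℤ, |R k|) := hGt
    _ = (|S2| + 2 * ∑ t ∈ Icc 1 (p - 1), ∑ j ∈ Icc 1 (p - t), |e t j|)
          * ∑' k : ℤ, |R k| := by
        simp only [← Finset.sum_mul]
        ring
    _ ≤ ((∑ i ∈ Icc 1 p, u i) * (∑ i ∈ Icc 1 p, v i)) * ∑' k : ℤ, |R k| :=
        mul_le_mul_of_nonneg_right hkey hT0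
    _ = (∑ i ∈ Icc 1 p, |blim i| + ∑ i ∈ Icc 1 p, |c' i|)
          * (∑ i ∈ Icc 1 p, |blim i - c' i|) * ∑' k : ℤ, |R k| := by
        simp only [hu, hv, Finset.sum_add_distrib]

theorem stmt_11 (R : ℤ → ℝ) (hsym : ∀ k, R (-k) = R k) (hR : Summable fun k => |R k|)
    (b : ℕ → ℕ → ℝ) (blim : ℕ → ℝ) (hb : Summable fun k => |blim k|)
    (h : Tendsto (fun p => ∑ k ∈ Icc 1 p, |b k p - blim k|) atTop (nhds 0))
    (hsup : limsup (fun p => ∑ k ∈ Icc 1 p, |b k p|) atTop ≤ ∑' k : ℕ, |blim (k + 1)|) :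
    (∀ p, ∑' k : ℤ, |filtCov R blim p k - filtCov R (fun j => b j p) p k|
        ≤ (∑ i ∈ Icc 1 p, |blim i| + ∑ i ∈ Icc 1 p, |b i p|)
            * (∑ i ∈ Icc 1 p, |blim i - b i p|) * ∑' k : ℤ, |R k|) ∧
      Tendsto (fun p => ∑' k : ℤ, |filtCov R blim p k - filtCov R (fun j => b j p) p k|)
        atTop (nhds 0) := by
  have part1 : ∀ p, ∑' k : ℤ, |filtCov R blim p k - filtCov R (fun j => b j p) p k|
      ≤ (∑ i ∈ Icc 1 p, |blim i| + ∑ i ∈ Icc 1 p, |b i p|)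
          * (∑ i ∈ Icc 1 p, |blim i - b i p|) * ∑' k : ℤ, |R k| :=
    fun p => bound_one R hR blim (fun j => b j p) p
  refine ⟨part1, ?_⟩
  set C : ℝ := ∑' k : ℕ, |blim k| with hC
  set T : ℝ := ∑' k : ℤ, |R k| with hT
  have hT0 : 0 ≤ T := tsum_nonneg fun k => abs_nonneg _
  set dd : ℕ → ℝ := fun p => ∑ i ∈ Icc 1 p, |b i p - blim i| with hdd
  have hdd0 : ∀ p, 0 ≤ dd p := fun p => Finset.sum_nonneg fun i _ => abs_nonneg _
  have hC0 : 0 ≤ C := tsum_nonneg fun k => abs_nonneg _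
  have hA : ∀ p, ∑ i ∈ Icc 1 p, |blim i| ≤ C :=
    fun p => Summable.sum_le_tsum _ (fun i _ => abs_nonneg _) hb
  have hA' : ∀ p, ∑ i ∈ Icc 1 p, |b i p| ≤ C + dd p := by
    intro p
    have : ∑ i ∈ Icc 1 p, |b i p| ≤ ∑ i ∈ Icc 1 p, (|blim i| + |b i p - blim i|) := by
      refine Finset.sum_le_sum fun i _ => ?_
      have := abs_add_le (blim i) (b i p - blim i)
      simpa using this
    rw [Finset.sum_add_distrib] at this
    exact this.trans (add_le_add_left (hA p) _)
  apply squeeze_zero (g := fun p => (C + (C + dd p)) * dd p * T)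
  · intro p
    exact tsum_nonneg fun k => abs_nonneg _
  · intro p
    refine (part1 p).trans ?_
    have hrw : ∑ i ∈ Icc 1 p, |blim i - b i p| = dd p := by
      simp only [hdd]
      exact Finset.sum_congr rfl fun i _ => abs_sub_comm _ _
    rw [hrw]
    gcongr ((?_ + ?_) * ?_) * ?_
    · exact hA p
    · exact hA' p
  · have hlim : Tendsto (fun p => (C + (C + dd p)) * dd p * T) atTop
        (nhds ((C + (C + 0)) * 0 * T)) :=
      ((tendsto_const_nhds.add (tendsto_const_nhds.add h)).mul h).mul tendsto_const_nhds
    simpa using hlim
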